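/- arXiv:1603.06251 — 9 statements merged into one kernel-verified Lean document; each statement's English description precedes it below -/
import Mathlib

section
/- The set Δ of distance distribution functions φ : [0,∞] → [0,1] satisfying the left-continuity condition φ(β) = sup_{α<β} φ(α), equipped with the pointwise order and the convolution product (φ ⊗ ψ)(γ) = sup_{α+β≤γ} φ(α)·ψ(β), is a commutative quantale whose unit κ satisfies κ(0) = 0 and κ(α) = 1 for all α > 0. -/
open ENNReal

/-- A distance distribution function: values in `[0,1]` and left continuous. -/
def IsDDF (φ : ENNReal → ENNReal) : Prop :=
  (∀ x, φ x ≤ 1) ∧ ∀ β, φ β = ⨆ (α) (_ : α < β), φ α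

/-- The convolution product on `Δ`. -/
noncomputable def conv (φ ψ : ENNReal → ENNReal) : ENNReal → ENNReal :=
  fun γ => ⨆ (α) (β) (_ : α + β ≤ γ), φ α * ψ β

/-- The unit of the convolution product. -/
noncomputable def kappa : ENNReal → ENNReal := fun α => if α = 0 then 0 else 1

lemma IsDDF.mono {φ : ENNReal → ENNReal} (h : IsDDF φ) : Monotone φ := by
  intro a b hab
  rcases hab.lt_or_eq with h' | rfl
  · rw [h.2 b]
    exact le_iSup₂ (f := fun α (_ : α < b) => φ α) a h'
  · exact le_rfl

lemma IsDDF.zero {φ : ENNReal → ENNReal} (h : IsDDF φ) : φ 0 = 0 := by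
  rw [h.2 0]; simp

lemma conv_le {φ ψ : ENNReal → ENNReal} {γ x : ENNReal}
    (h : ∀ α β, α + β ≤ γ → φ α * ψ β ≤ x) : conv φ ψ γ ≤ x :=
  iSup_le fun α => iSup_le fun β => iSup_le fun hab => h α β hab

lemma le_conv {φ ψ : ENNReal → ENNReal} {γ : ENNReal} (α β : ENNReal)
    (h : α + β ≤ γ) : φ α * ψ β ≤ conv φ ψ γ := by
  refine le_iSup_of_le α (le_iSup_of_le β ?_)
  exact le_iSup (fun _ : α + β ≤ γ => φ α * ψ β) h

lemma conv_triple (φ ψ χ : ENNReal → ENNReal) (γ : ENNReal) :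
    conv (conv φ ψ) χ γ = ⨆ (α) (β) (c) (_ : α + β + c ≤ γ), φ α * ψ β * χ c := by
  apply le_antisymm
  · refine conv_le fun a c hac => ?_
    rw [conv, ENNReal.iSup_mul]
    refine iSup_le fun α => ?_
    rw [ENNReal.iSup_mul]
    refine iSup_le fun β => ?_
    rw [ENNReal.iSup_mul]
    refine iSup_le fun hab => ?_
    have : α + β + c ≤ γ := le_trans (add_le_add_left hab c) hac
    refine le_iSup_of_le α (le_iSup_of_le β (le_iSup_of_le c ?_))
    exact le_iSup (fun _ : α + β + c ≤ γ => φ α * ψ β * χ c) this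
  · refine iSup_le fun α => iSup_le fun β => iSup_le fun c => iSup_le fun h => ?_
    calc φ α * ψ β * χ c ≤ conv φ ψ (α + β) * χ c :=
          mul_le_mul_left (le_conv α β le_rfl) _
      _ ≤ conv (conv φ ψ) χ γ := le_conv (α + β) c h

/-- `Δ`, with the pointwise order and the convolution product, is a commutative quantale
with unit `κ` (where `κ 0 = 0` and `κ α = 1` for `α > 0`): it is closed under convolution
and pointwise suprema, the convolution is commutative, associative, unital with unit `κ`,
and distributes over arbitrary pointwise suprema. -/
theorem Delta_commutative_quantale :
    IsDDF kappa ∧ kappa 0 = 0 ∧ (∀ α, 0 < α → kappa α = 1) ∧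
    (∀ φ ψ, IsDDF φ → IsDDF ψ → IsDDF (conv φ ψ)) ∧
    (∀ φ ψ, conv φ ψ = conv ψ φ) ∧
    (∀ φ ψ χ, conv (conv φ ψ) χ = conv φ (conv ψ χ)) ∧
    (∀ φ, IsDDF φ → conv φ kappa = φ) ∧
    (∀ S : Set (ENNReal → ENNReal), (∀ φ ∈ S, IsDDF φ) →
        IsDDF (fun x => ⨆ φ ∈ S, φ x)) ∧
    (∀ (φ : ENNReal → ENNReal) (S : Set (ENNReal → ENNReal)), IsDDF φ →
        (∀ ψ ∈ S, IsDDF ψ) →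
        conv φ (fun x => ⨆ ψ ∈ S, ψ x) = fun x => ⨆ ψ ∈ S, conv φ ψ x) := by
  have hκ : IsDDF kappa := by
    constructor
    · intro x; unfold kappa; split <;> simp
    · intro β
      rcases eq_or_ne β 0 with rfl | hβ
      · simp [kappa]
      · apply le_antisymm
        · obtain ⟨α, h0, hαβ⟩ := exists_between (zero_lt_iff.mpr hβ)
          have : kappa α = 1 := by simp [kappa, h0.ne']
          have hk : kappa β ≤ 1 := by unfold kappa; split <;> simp
          calc kappa β ≤ 1 := hk
            _ = kappa α := this.symm
            _ ≤ _ := le_iSup₂ (f := fun α (_ : α < β) => kappa α) α hαβ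
        · refine iSup₂_le fun α hα => ?_
          simp only [kappa, if_neg hβ]
          split <;> simp
  refine ⟨hκ, by simp [kappa], fun α hα => by simp [kappa, hα.ne'], ?_, ?_, ?_, ?_, ?_, ?_⟩
  · -- closure under conv
    intro φ ψ hφ hψ
    constructor
    · intro x
      refine conv_le fun α β _ => ?_
      calc φ α * ψ β ≤ 1 * 1 := mul_le_mul' (hφ.1 α) (hψ.1 β)
        _ = 1 := one_mul 1
    · intro γ
      apply le_antisymm
      · refine conv_le fun α β hab => ?_
        rcases eq_or_ne α 0 with rfl | hα
        · simp [hφ.zero]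
        rcases eq_or_ne β 0 with rfl | hβ
        · simp [hψ.zero]
        rw [hφ.2 α, ENNReal.iSup_mul]
        refine iSup_le fun α' => ?_
        rw [ENNReal.iSup_mul]
        refine iSup_le fun hα' => ?_
        rw [hψ.2 β, ENNReal.mul_iSup]
        refine iSup_le fun β' => ?_
        rw [ENNReal.mul_iSup]
        refine iSup_le fun hβ' => ?_
        have hlt : α' + β' < γ := lt_of_lt_of_le (ENNReal.add_lt_add hα' hβ') hab
        refine le_iSup₂_of_le (α' + β') hlt ?_
        exact le_conv α' β' le_rfl
      · refine iSup₂_le fun γ' hγ' => ?_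
        exact conv_le fun α β hab => le_conv α β (hab.trans hγ'.le)
  · -- commutativity
    intro φ ψ
    funext γ
    apply le_antisymm <;>
      exact conv_le fun α β hab => by
        rw [mul_comm]; exact le_conv β α (by rwa [add_comm])
  · -- associativity
    intro φ ψ χ
    funext γ
    rw [conv_triple]
    apply le_antisymm
    · refine iSup_le fun α => iSup_le fun β => iSup_le fun c => iSup_le fun h => ?_
      calc φ α * ψ β * χ c = φ α * (ψ β * χ c) := mul_assoc _ _ _
        _ ≤ φ α * conv ψ χ (β + c) := mul_le_mul_right (le_conv β c le_rfl) _
        _ ≤ conv φ (conv ψ χ) γ := le_conv α (β + c) (by rwa [← add_assoc])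
    · refine conv_le fun α a hαa => ?_
      rw [conv, ENNReal.mul_iSup]
      refine iSup_le fun β => ?_
      rw [ENNReal.mul_iSup]
      refine iSup_le fun c => ?_
      rw [ENNReal.mul_iSup]
      refine iSup_le fun hbc => ?_
      have : α + β + c ≤ γ := by
        rw [add_assoc]; exact le_trans (add_le_add_right hbc α) hαa
      refine le_iSup_of_le α (le_iSup_of_le β (le_iSup_of_le c ?_))
      rw [← mul_assoc]
      exact le_iSup (fun _ : α + β + c ≤ γ => φ α * ψ β * χ c) this
  · -- unit
    intro φ hφ
    funext γ
    apply le_antisymm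
    · refine conv_le fun α β hab => ?_
      rcases eq_or_ne β 0 with rfl | hβ
      · simp [kappa]
      · have : kappa β = 1 := by simp [kappa, hβ]
        rw [this, mul_one]
        exact hφ.mono (le_trans le_self_add hab)
    · conv_lhs => rw [hφ.2 γ]
      refine iSup₂_le fun α hα => ?_
      have h1 : kappa (γ - α) = 1 := by
        simp [kappa, (tsub_pos_iff_lt.mpr hα).ne']
      have h2 : α + (γ - α) = γ := add_tsub_cancel_of_le hα.le
      calc φ α = φ α * kappa (γ - α) := by rw [h1, mul_one]
        _ ≤ conv φ kappa γ := le_conv α (γ - α) h2.le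
  · -- closure under sups
    intro S hS
    constructor
    · intro x
      exact iSup₂_le fun φ hφ => (hS φ hφ).1 x
    · intro β
      apply le_antisymm
      · refine iSup₂_le fun φ hφ => ?_
        rw [(hS φ hφ).2 β]
        refine iSup₂_le fun α hα => ?_
        refine le_iSup₂_of_le α hα ?_
        exact le_iSup₂ (f := fun φ (_ : φ ∈ S) => φ α) φ hφ
      · refine iSup₂_le fun α hα => iSup₂_le fun φ hφ => ?_
        refine le_iSup₂_of_le φ hφ ?_
        rw [(hS φ hφ).2 β]
        exact le_iSup₂ (f := fun α (_ : α < β) => φ α) α hα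
  · -- distributivity
    intro φ S _ _
    funext γ
    apply le_antisymm
    · refine conv_le fun α β hab => ?_
      rw [ENNReal.mul_iSup]
      refine iSup_le fun ψ => ?_
      rw [ENNReal.mul_iSup]
      refine iSup_le fun hψ => ?_
      exact le_iSup₂_of_le ψ hψ (le_conv α β hab)
    · refine iSup₂_le fun ψ hψ => conv_le fun α β hab => ?_
      have : ψ β ≤ ⨆ ψ' ∈ S, ψ' β :=
        le_iSup₂ (f := fun ψ' (_ : ψ' ∈ S) => ψ' β) ψ hψ
      exact le_trans (mul_le_mul_right this _) (le_conv α β hab)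
end

section
/- The map τ : [0,1] → Δ defined by τ(u)(γ) = u if γ > 0 and τ(u)(0) = 0 is a homomorphism of quantales from ([0,1], ≤, ·) to (Δ, ⊗). -/
open ENNReal

/-- `τ(u)(γ) = u` if `γ > 0`, and `τ(u)(0) = 0`. -/
noncomputable def tauMap (u : ENNReal) : ENNReal → ENNReal :=
  fun γ => if γ = 0 then 0 else u

lemma tauMap_le (u : ENNReal) (γ : ENNReal) : tauMap u γ ≤ u := by
  unfold tauMap; split <;> simp

/-- `τ : ([0,1], ≤, ·) → (Δ, ⊗)` is a homomorphism of quantales: it takes values in `Δ`,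
preserves arbitrary suprema, the multiplication, and the unit. -/
theorem tau_quantale_hom :
    (∀ u, u ≤ 1 → IsDDF (tauMap u)) ∧
    (∀ S : Set ENNReal, (∀ u ∈ S, u ≤ 1) →
        tauMap (sSup S) = fun γ => ⨆ u ∈ S, tauMap u γ) ∧
    (∀ u v, u ≤ 1 → v ≤ 1 → conv (tauMap u) (tauMap v) = tauMap (u * v)) ∧
    tauMap 1 = kappa := by
  refine ⟨fun u hu => ⟨fun x => ?_, fun β => ?_⟩, fun S hS => ?_, fun u v hu hv => ?_, ?_⟩
  · unfold tauMap; split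
    · exact zero_le_one
    · exact hu
  · rcases eq_or_ne β 0 with hβ | hβ
    · subst hβ
      simp [tauMap]
    · apply le_antisymm
      · obtain ⟨α, hα0, hαβ⟩ := exists_between (pos_iff_ne_zero.mpr hβ)
        calc tauMap u β = u := by simp [tauMap, hβ]
          _ = tauMap u α := by simp [tauMap, hα0.ne']
          _ ≤ _ := le_iSup₂ (f := fun α (_ : α < β) => tauMap u α) α hαβ
      · exact iSup₂_le fun α _ => by
          calc tauMap u α ≤ u := tauMap_le u α
            _ = tauMap u β := by simp [tauMap, hβ]
  · funext γ
    rcases eq_or_ne γ 0 with hγ | hγ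
    · simp [tauMap, hγ]
    · simp only [tauMap, if_neg hγ]
      exact sSup_eq_iSup
  · funext γ
    rcases eq_or_ne γ 0 with hγ | hγ
    · subst hγ
      simp only [conv, tauMap, if_pos rfl]
      apply le_antisymm
      · refine iSup₂_le fun α β => iSup_le fun hab => ?_
        have hα : α = 0 := by
          have := le_trans (le_add_right le_rfl) hab
          exact le_antisymm this zero_le
        simp [hα]
      · exact zero_le
    · simp only [tauMap, if_neg hγ]
      apply le_antisymm
      · refine iSup₂_le fun α β => iSup_le fun _ => ?_
        exact mul_le_mul' (tauMap_le u α) (tauMap_le v β)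
      · have hγ2 : γ / 2 ≠ 0 := by
          simp [ENNReal.div_eq_zero_iff, hγ]
        have hle : γ / 2 + γ / 2 ≤ γ := by
          rw [ENNReal.add_halves]
        calc u * v = tauMap u (γ/2) * tauMap v (γ/2) := by simp [tauMap, hγ2]
          _ ≤ _ := le_iSup₂_of_le (γ/2) (γ/2) (le_iSup_of_le hle le_rfl : _ ≤ ⨆ (_ : γ/2 + γ/2 ≤ γ), tauMap u (γ/2) * tauMap v (γ/2))
  · funext γ
    rfl
end

section
/- Every distance distribution function φ ∈ Δ admits the presentation φ = sup_{γ ∈ [0,∞]} σ(γ) ⊗ τ(φ(γ)), where σ(γ)(x) = 0 if x ≤ γ, σ(γ)(x) = 1 otherwise, and τ(u)(x) = u if x > 0, τ(u)(0) = 0. -/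
open ENNReal

noncomputable def sigmaMap (α : ENNReal) : ENNReal → ENNReal :=
  fun γ => if γ ≤ α then 0 else 1

/-- Every distance distribution function `φ` admits the presentation
`φ = ⨆ γ, σ(γ) ⊗ τ(φ(γ))`. -/
theorem ddf_presentation (φ : ENNReal → ENNReal) (h : IsDDF φ) :
    φ = fun x => ⨆ γ : ENNReal, conv (sigmaMap γ) (tauMap (φ γ)) x := by
  obtain ⟨hb, hl⟩ := h
  have hmono : ∀ {a b : ENNReal}, a < b → φ a ≤ φ b := by
    intro a b hab
    rw [hl b]
    exact le_iSup₂ (f := fun α (_ : α < b) => φ α) a hab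
  funext x
  apply le_antisymm
  · rw [hl x]
    apply iSup₂_le
    intro α hα
    obtain ⟨c, hac, hcx⟩ := exists_between hα
    refine le_trans ?_ (le_iSup _ α)
    unfold conv sigmaMap tauMap
    have h1 : c + (x - c) ≤ x := by
      rw [add_tsub_cancel_of_le hcx.le]
    refine le_trans ?_ (le_iSup₂_of_le c (x - c) (le_iSup_of_le h1 le_rfl))
    simp [not_le.mpr hac, (tsub_pos_of_lt hcx).ne']
  · apply iSup_le; intro γ
    apply iSup_le; intro α
    apply iSup_le; intro β
    apply iSup_le; intro hab
    unfold sigmaMap tauMap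
    by_cases h1 : α ≤ γ
    · simp [h1]
    · by_cases h2 : β = 0
      · simp [h2]
      · simp only [if_neg h1, if_neg h2, one_mul]
        exact hmono ((not_le.mp h1).trans_le (le_trans le_self_add hab))
end

section
/- For a divisible quantale V, the following data form a category DV (the quantaloid of diagonals): objects are elements of V; morphisms d : u → v are elements d ∈ V with d ≤ u ∧ v; composition of d : u → v with e : v → w is e ⊗ (v ↘ d) (which equals (e ↙ v) ⊗ d); and the identity on v is v itself. In particular, composition is associative and unital. -/
/-- For a divisible quantale `V`, the diagonals form a category `DV`: objects are elements
of `V`, a morphism `d : u → v` is `d ≤ u ⊓ v`, composition of `d : u → v` and `e : v → w`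
is `e * (v ↘ d)` (which equals `(e ↙ v) * d`), and the identity on `v` is `v` itself;
composition is well-defined (lands in morphisms `u → w`), associative and unital.
Here `v ↘ d = sSup {a | v * a ≤ d}` and `e ↙ v = sSup {a | a * v ≤ e}`. -/
theorem diagonal_quantaloid_category (V : Type*) [CompleteLattice V] [Monoid V]
    (hl : ∀ (u : V) (S : Set V), u * sSup S = ⨆ v ∈ S, u * v)
    (hr : ∀ (u : V) (S : Set V), sSup S * u = ⨆ v ∈ S, v * u)
    (hdiv : ∀ u v : V, u ≤ v → ∃ a b : V, a * v = u ∧ v * b = u) :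
    -- composition is well-defined
    (∀ u v w d e : V, d ≤ u ⊓ v → e ≤ v ⊓ w →
        e * sSup {a | v * a ≤ d} ≤ u ⊓ w) ∧
    -- the two descriptions of composition agree
    (∀ u v w d e : V, d ≤ u ⊓ v → e ≤ v ⊓ w →
        e * sSup {a | v * a ≤ d} = sSup {a | a * v ≤ e} * d) ∧
    -- right unit law: `d ∘ 1_u = d` for `d : u → v`
    (∀ u v d : V, d ≤ u ⊓ v → d * sSup {a | u * a ≤ u} = d) ∧
    -- left unit law: `1_v ∘ d = d` for `d : u → v`
    (∀ u v d : V, d ≤ u ⊓ v → v * sSup {a | v * a ≤ d} = d) ∧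
    -- associativity: for `d : u → v`, `e : v → w`, `f : w → z`
    (∀ u v w z d e f : V, d ≤ u ⊓ v → e ≤ v ⊓ w → f ≤ w ⊓ z →
        f * sSup {a | w * a ≤ e * sSup {b | v * b ≤ d}} =
          (f * sSup {a | w * a ≤ e}) * sSup {b | v * b ≤ d}) := by
  -- multiplication is monotone in each argument
  have mono_r : ∀ a x y : V, x ≤ y → a * x ≤ a * y := by
    intro a x y hxy
    have h := hl a {x, y}
    rw [sSup_pair, sup_eq_right.mpr hxy] at h
    rw [h]
    exact le_biSup (fun v => a * v) (Set.mem_insert x {y})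
  have mono_l : ∀ a x y : V, x ≤ y → x * a ≤ y * a := by
    intro a x y hxy
    have h := hr a {x, y}
    rw [sSup_pair, sup_eq_right.mpr hxy] at h
    rw [h]
    exact le_biSup (fun v => v * a) (Set.mem_insert x {y})
  -- multiplication is deflationary
  have mul_le_left : ∀ a b : V, a * b ≤ a := by
    intro a b
    obtain ⟨c, _, hc, -⟩ := hdiv a ⊤ le_top
    calc a * b = c * (⊤ * b) := by rw [← mul_assoc, hc]
    _ ≤ c * ⊤ := mono_r _ _ _ le_top
    _ = a := hc
  have mul_le_right : ∀ a b : V, a * b ≤ b := by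
    intro a b
    obtain ⟨-, c, -, hc⟩ := hdiv b ⊤ le_top
    calc a * b = (a * ⊤) * c := by rw [mul_assoc, hc]
    _ ≤ ⊤ * c := mono_l _ _ _ le_top
    _ = b := hc
  -- key lemmas
  have lemA : ∀ v d : V, d ≤ v → v * sSup {a | v * a ≤ d} = d := by
    intro v d hdv
    apply le_antisymm
    · rw [hl]
      exact iSup₂_le fun a ha => ha
    · obtain ⟨-, b, -, hb⟩ := hdiv d v hdv
      calc d = v * b := hb.symm
      _ ≤ v * sSup {a | v * a ≤ d} := mono_r _ _ _ (le_sSup (by simp [hb.le]))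
  have lemB : ∀ v e : V, e ≤ v → sSup {a | a * v ≤ e} * v = e := by
    intro v e hev
    apply le_antisymm
    · rw [hr]
      exact iSup₂_le fun a ha => ha
    · obtain ⟨b, -, hb, -⟩ := hdiv e v hev
      calc e = b * v := hb.symm
      _ ≤ sSup {a | a * v ≤ e} * v := mono_l _ _ _ (le_sSup (by simp [hb.le]))
  refine ⟨?_, ?_, ?_, ?_, ?_⟩
  · -- well-definedness
    intro u v w d e hd he
    refine le_inf ?_ ((mul_le_left e _).trans (he.trans inf_le_right))
    calc e * sSup {a | v * a ≤ d} ≤ v * sSup {a | v * a ≤ d} :=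
          mono_l _ _ _ (he.trans inf_le_left)
    _ = d := lemA v d (hd.trans inf_le_right)
    _ ≤ u := hd.trans inf_le_left
  · -- the two descriptions agree
    intro u v w d e hd he
    calc e * sSup {a | v * a ≤ d}
        = (sSup {a | a * v ≤ e} * v) * sSup {a | v * a ≤ d} := by
          rw [lemB v e (he.trans inf_le_left)]
    _ = sSup {a | a * v ≤ e} * (v * sSup {a | v * a ≤ d}) := mul_assoc _ _ _
    _ = sSup {a | a * v ≤ e} * d := by rw [lemA v d (hd.trans inf_le_right)]
  · -- right unit
    intro u v d hd
    refine le_antisymm (mul_le_left _ _) ?_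
    calc d = d * 1 := (mul_one d).symm
    _ ≤ d * sSup {a | u * a ≤ u} := mono_r _ _ _ (le_sSup (by simp))
  · -- left unit
    intro u v d hd
    exact lemA v d (hd.trans inf_le_right)
  · -- associativity
    intro u v w z d e f hd he hf
    have hg : e * sSup {b | v * b ≤ d} ≤ w := (mul_le_left e _).trans (he.trans inf_le_right)
    have hT : sSup {a | a * w ≤ f} * w = f := lemB w f (hf.trans inf_le_left)
    calc f * sSup {a | w * a ≤ e * sSup {b | v * b ≤ d}}
        = (sSup {a | a * w ≤ f} * w) * sSup {a | w * a ≤ e * sSup {b | v * b ≤ d}} := by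
          rw [hT]
    _ = sSup {a | a * w ≤ f} * (w * sSup {a | w * a ≤ e * sSup {b | v * b ≤ d}}) :=
          mul_assoc _ _ _
    _ = sSup {a | a * w ≤ f} * (e * sSup {b | v * b ≤ d}) := by
          rw [lemA w _ hg]
    _ = (sSup {a | a * w ≤ f} * e) * sSup {b | v * b ≤ d} := (mul_assoc _ _ _).symm
    _ = ((sSup {a | a * w ≤ f} * (w * sSup {a | w * a ≤ e}))) * sSup {b | v * b ≤ d} := by
          rw [lemA w e (he.trans inf_le_right)]
    _ = (f * sSup {a | w * a ≤ e}) * sSup {b | v * b ≤ d} := by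
          rw [← mul_assoc, hT]
end

section
/- For a divisible quantale V, the backward globalization map δ : DV → V, sending a diagonal (d : u → v) to v ↘ d, is a lax homomorphism satisfying δ ∘ ι = id_V: it is monotone on hom-sets, satisfies 1 ≤ δ(1_v) (i.e., k ≤ v ↘ v), and δ(e) ⊗ δ(d) ≤ δ(e ∘ d) for composable diagonals d : u → v, e : v → w. -/
/-- For a divisible quantale `V`, the backward globalization `δ : DV → V`, sending a
diagonal `d : u → v` to `v ↘ d = sSup {a | v * a ≤ d}`, is a lax homomorphism with
`δ ∘ ι = id`: it splits `ι`, is monotone on hom-sets, satisfies `1 ≤ δ(1_v)` (i.e.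
`1 ≤ v ↘ v`), and `δ(e) * δ(d) ≤ δ(e ∘ d)` for composable diagonals `d : u → v`,
`e : v → w` (where `e ∘ d = e * (v ↘ d)` is a morphism `u → w`). -/
theorem delta_lax_hom (V : Type*) [CompleteLattice V] [Monoid V]
    (hl : ∀ (u : V) (S : Set V), u * sSup S = ⨆ v ∈ S, u * v)
    (hr : ∀ (u : V) (S : Set V), sSup S * u = ⨆ v ∈ S, v * u)
    (hdiv : ∀ u v : V, u ≤ v → ∃ a b : V, a * v = u ∧ v * b = u) :
    -- δ ∘ ι = id : δ(v : 1 → 1) = 1 ↘ v = v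
    (∀ v : V, v ≤ (1 : V) ⊓ 1 → sSup {a | (1 : V) * a ≤ v} = v) ∧
    -- monotone on hom-sets
    (∀ u v d d' : V, d ≤ d' → d' ≤ u ⊓ v →
        sSup {a | v * a ≤ d} ≤ sSup {a | v * a ≤ d'}) ∧
    -- lax unit law: 1 ≤ δ(1_v)
    (∀ v : V, (1 : V) ≤ sSup {a | v * a ≤ v}) ∧
    -- lax multiplication law: δ(e) * δ(d) ≤ δ(e ∘ d)
    (∀ u v w d e : V, d ≤ u ⊓ v → e ≤ v ⊓ w →
        sSup {a | w * a ≤ e} * sSup {a | v * a ≤ d} ≤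
          sSup {a | w * a ≤ e * sSup {b | v * b ≤ d}}) := by
  -- counit: v * δ(d) ≤ d
  have key : ∀ v d : V, v * sSup {a | v * a ≤ d} ≤ d := by
    intro v d
    rw [hl]
    exact iSup₂_le fun a ha => ha
  have mono_r : ∀ x y z : V, x ≤ y → x * z ≤ y * z := by
    intro x y z hxy
    have : y = sSup {x, y} := by
      rw [sSup_pair, sup_eq_right.mpr hxy]
    rw [this, hr]
    exact le_trans (le_iSup₂ (f := fun v _ => v * z) x (by simp)) le_rfl
  refine ⟨?_, ?_, ?_, ?_⟩
  · intro v _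
    apply le_antisymm
    · apply sSup_le; intro a ha; simpa using ha
    · apply le_sSup; simp [Set.mem_setOf_eq]
  · intro u v d d' hdd' _
    exact sSup_le_sSup fun a ha => le_trans ha hdd'
  · intro v
    apply le_sSup; simp [Set.mem_setOf_eq]
  · intro u v w d e _ _
    apply le_sSup
    show w * (sSup {a | w * a ≤ e} * sSup {a | v * a ≤ d}) ≤ _
    rw [← mul_assoc]
    exact mono_r _ _ _ (key w e)
end

section
/- A D([0,∞])-category is exactly a partial metric space: a set X with a function a : X × X → [0,∞] satisfying a(x,x) ≤ a(x,y) and a(y,y) ≤ a(x,y) and a(x,z) ≤ a(x,y) − a(y,y) + a(y,z) for all x, y, z ∈ X (where subtraction is truncated appropriately and a(y,y) ≤ a(x,y) ensures it is well-defined). -/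
universe u

/-- A `D([0,∞])`-category: a set `X` with an array map `arr : X → [0,∞]` and
`d x y : arr x ⇀ arr y` a diagonal, i.e. `max (arr x) (arr y) ≤ d x y`, subject to
`1_{arr x} ≤ d x x` (i.e. `d x x ≤ arr x` in the natural order) and the composition law
`d x z ≤ (d x y - arr y) + d y z` (composition of diagonals being `e - v + d`). -/
structure DInfCat (X : Type u) where
  arr : X → ENNReal
  d : X → X → ENNReal
  hom : ∀ x y, max (arr x) (arr y) ≤ d x y
  refl : ∀ x, d x x ≤ arr x
  trans : ∀ x y z, d x z ≤ d x y - arr y + d y z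

/-- A partial metric on `X`. -/
structure PartialMetricOn (X : Type u) where
  d : X → X → ENNReal
  self_le_left : ∀ x y, d x x ≤ d x y
  self_le_right : ∀ x y, d y y ≤ d x y
  triangle : ∀ x y z, d x z ≤ d x y - d y y + d y z

lemma DInfCat.arr_eq {X : Type u} (c : DInfCat X) (x : X) : c.arr x = c.d x x :=
  le_antisymm (le_trans (le_max_left _ _) (c.hom x x)) (c.refl x)

/-- A `D([0,∞])`-category is exactly a partial metric space; under the correspondence the
distance is unchanged and the array of `x` is `d x x`. -/
theorem dinfcat_is_partial_metric (X : Type u) :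
    ∃ e : DInfCat X ≃ PartialMetricOn X,
      ∀ c : DInfCat X, (e c).d = c.d ∧ ∀ x, c.arr x = c.d x x := by
  refine ⟨{
    toFun := fun c => ⟨c.d,
      fun x y => le_trans (c.arr_eq x ▸ le_max_left _ _) (c.hom x y),
      fun x y => le_trans (c.arr_eq y ▸ le_max_right _ _) (c.hom x y),
      fun x y z => (c.arr_eq y) ▸ c.trans x y z⟩
    invFun := fun p => ⟨fun x => p.d x x, p.d,
      fun x y => max_le (p.self_le_left x y) (p.self_le_right x y),
      fun x => le_rfl,
      p.triangle⟩
    left_inv := fun c => by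
      cases c with
      | mk arr d hom refl trans =>
        simp only [DInfCat.mk.injEq]
        exact ⟨funext fun x => (DInfCat.arr_eq ⟨arr, d, hom, refl, trans⟩ x).symm, trivial⟩
    right_inv := fun p => rfl }, fun c => ⟨rfl, fun x => c.arr_eq x⟩⟩
end

section
/- The right adjoint of the forgetful functor Σ : Met/[0,∞] → Met, expressed in terms of partial metrics, sends a generalized metric space (X, d) to the set X × [0,∞] equipped with the partial metric d⁺((x,α),(y,β)) = d(x,y) + max{α, β}; in particular, d⁺ is a partial metric: it satisfies d⁺(p,p) ≤ d⁺(p,q), d⁺(q,q) ≤ d⁺(p,q), and d⁺(p,r) ≤ d⁺(p,q) − d⁺(q,q) + d⁺(q,r) for all p, q, r ∈ X × [0,∞]. -/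
/-- The partial metric `d⁺((x,α),(y,β)) = d x y + max α β` on `X × [0,∞]`. -/
noncomputable def dplus {X : Type*} (d : X → X → ENNReal)
    (p q : X × ENNReal) : ENNReal :=
  d p.1 q.1 + max p.2 q.2

/-- For a generalized metric space `(X, d)`, the value of the right adjoint of
`Σ : Met/[0,∞] → Met`, expressed in terms of partial metrics, is `X × [0,∞]` with
`d⁺((x,α),(y,β)) = d x y + max α β`; in particular `d⁺` is a partial metric. -/
theorem dplus_partial_metric {X : Type*} (d : X → X → ENNReal)
    (hrefl : ∀ x, d x x = 0) (htri : ∀ x y z, d x z ≤ d x y + d y z) :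
    (∀ p q : X × ENNReal, dplus d p p ≤ dplus d p q) ∧
    (∀ p q : X × ENNReal, dplus d q q ≤ dplus d p q) ∧
    (∀ p q r : X × ENNReal,
        dplus d p r ≤ dplus d p q - dplus d q q + dplus d q r) := by
  refine ⟨?_, ?_, ?_⟩
  · intro p q
    simp only [dplus, hrefl, zero_add, max_self]
    exact le_add_left (le_max_left _ _)
  · intro p q
    simp only [dplus, hrefl, zero_add, max_self]
    exact le_add_left (le_max_right _ _)
  · intro p q r
    simp only [dplus, hrefl, zero_add, max_self]
    rcases eq_or_ne q.2 ⊤ with hq | hq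
    · have : max q.2 r.2 = ⊤ := by simp [hq]
      simp [this]
    rw [(ENNReal.cancel_of_ne hq).add_tsub_assoc_of_le (le_max_right _ _)]
    have hmax : max p.2 r.2 ≤ (max p.2 q.2 - q.2) + max q.2 r.2 := by
      rcases le_total p.2 r.2 with h | h
      · exact le_add_left (le_trans (max_le h le_rfl) (le_max_right _ _))
      · rw [max_eq_left h]
        rcases le_total p.2 q.2 with h2 | h2
        · exact le_add_left (le_trans h2 (le_max_left _ _))
        · rw [max_eq_left h2]
          calc p.2 = (p.2 - q.2) + q.2 := (tsub_add_cancel_of_le h2).symm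
            _ ≤ (p.2 - q.2) + max q.2 r.2 := by gcongr; exact le_max_left _ _
    calc d p.1 r.1 + max p.2 r.2
        ≤ (d p.1 q.1 + d q.1 r.1) + ((max p.2 q.2 - q.2) + max q.2 r.2) :=
          add_le_add (htri _ _ _) hmax
      _ = d p.1 q.1 + (max p.2 q.2 - q.2) + (d q.1 r.1 + max q.2 r.2) := by ring
end

section
/- For any commutative quantale V, the map λ_X : L(V^X) → V^{LX} sending a list (σ¹,…,σⁿ) of functions σⁱ : X → V to the function σ on lists defined by σ(x₁,…,x_m) = σ¹(x₁) ⊗ ⋯ ⊗ σⁿ(x_n) if m = n and σ(x₁,…,x_m) = ⊥ otherwise, is a natural transformation L∘P_V → P_V∘L between the composites of the list functor L (LX = ⋃_{n≥0} Xⁿ) and the V-powerset functor P_V (P_V X = V^X, with P_V f = f_! where (f_!σ)(y) = sup_{f(x)=y} σ(x)). -/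
/-- The distributive law `λ_X : L(V^X) → V^{LX}`: a list `(σ¹,…,σⁿ)` is sent to the
function on lists whose value at `(x₁,…,xₙ)` is `σ¹ x₁ * ⋯ * σⁿ xₙ`, and `⊥` on lists of
the wrong length. -/
noncomputable def lamLaw {V : Type*} [CompleteLattice V] [Monoid V] {X : Type*}
    (σs : List (X → V)) : List X → V := fun xs =>
  if xs.length = σs.length then (List.zipWith (fun σ x => σ x) σs xs).prod else ⊥

/-- The `V`-powerset functor on morphisms: `(f_! σ) y = ⨆_{f x = y} σ x`. -/
noncomputable def fbang {V : Type*} [CompleteLattice V] {X Y : Type*}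
    (f : X → Y) (σ : X → V) : Y → V :=
  fun y => ⨆ x : {x // f x = y}, σ x.1

section Aux

variable {V : Type*} [CompleteLattice V] [CommMonoid V]

lemma mul_iSup' (hl : ∀ (u : V) (S : Set V), u * sSup S = ⨆ v ∈ S, u * v)
    {ι : Sort*} (u : V) (g : ι → V) : u * (⨆ i, g i) = ⨆ i, u * g i := by
  rw [iSup, hl, iSup_range]

lemma iSup_mul' (hr : ∀ (u : V) (S : Set V), sSup S * u = ⨆ v ∈ S, v * u)
    {ι : Sort*} (u : V) (g : ι → V) : (⨆ i, g i) * u = ⨆ i, g i * u := by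
  rw [iSup, hr, iSup_range]

lemma key_lemma (hl : ∀ (u : V) (S : Set V), u * sSup S = ⨆ v ∈ S, u * v)
    (hr : ∀ (u : V) (S : Set V), sSup S * u = ⨆ v ∈ S, v * u)
    {X Y : Type*} (f : X → Y) (σs : List (X → V)) :
    ∀ (ys : List Y), ys.length = σs.length →
    (⨆ xs : {xs : List X // xs.map f = ys},
        (List.zipWith (fun σ x => σ x) σs xs.1).prod)
      = (List.zipWith (fun (σ : X → V) y => fbang f σ y) σs ys).prod := by
  induction σs with
  | nil =>
    intro ys h
    cases ys with
    | nil =>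
      haveI : Nonempty {xs : List X // xs.map f = ([] : List Y)} := ⟨⟨[], rfl⟩⟩
      simp
    | cons y ys => simp at h
  | cons σ σs ih =>
    intro ys h
    cases ys with
    | nil => simp at h
    | cons y ys =>
      have h' : ys.length = σs.length := by simpa using h
      rw [List.zipWith_cons_cons, List.prod_cons, ← ih ys h']
      show _ = (⨆ x : {x // f x = y}, σ x.1) * _
      rw [iSup_mul' hr]
      simp only [mul_iSup' hl]
      apply le_antisymm
      · refine iSup_le fun xs => ?_
        obtain ⟨xs, hxs⟩ := xs
        cases xs with
        | nil => simp at hxs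
        | cons a t =>
          simp only [List.map_cons, List.cons.injEq] at hxs
          refine le_iSup_of_le ⟨a, hxs.1⟩ ?_
          refine le_iSup_of_le ⟨t, hxs.2⟩ ?_
          simp
      · refine iSup_le fun x => iSup_le fun t => ?_
        refine le_iSup_of_le ⟨x.1 :: t.1, by simp [x.2, t.2]⟩ ?_
        simp

end Aux

/-- For a commutative quantale `V`, the family `λ` is a natural transformation
`L ∘ P_V → P_V ∘ L`: for every `f : X → Y`, `(Lf)_! ∘ λ_X = λ_Y ∘ L(f_!)`. -/
theorem lam_natural (V : Type*) [CompleteLattice V] [CommMonoid V]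
    (hl : ∀ (u : V) (S : Set V), u * sSup S = ⨆ v ∈ S, u * v)
    (hr : ∀ (u : V) (S : Set V), sSup S * u = ⨆ v ∈ S, v * u)
    {X Y : Type*} (f : X → Y) (σs : List (X → V)) :
    fbang (List.map f) (lamLaw σs) = lamLaw (σs.map (fbang f)) := by
  funext ys
  show (⨆ xs : {xs : List X // xs.map f = ys}, lamLaw σs xs.1) = _
  by_cases h : ys.length = σs.length
  · have hterm : ∀ xs : {xs : List X // xs.map f = ys},
        lamLaw σs xs.1 = (List.zipWith (fun σ x => σ x) σs xs.1).prod := by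
      intro xs
      have hx : xs.1.length = σs.length := by
        have h2 := congrArg List.length xs.2
        simp only [List.length_map] at h2
        omega
      simp [lamLaw, hx]
    rw [iSup_congr hterm, key_lemma hl hr f σs ys h]
    simp [lamLaw, h, List.zipWith_map_left]
  · have hterm : ∀ xs : {xs : List X // xs.map f = ys},
        lamLaw σs xs.1 = ⊥ := by
      intro xs
      have hx : xs.1.length ≠ σs.length := by
        have h2 := congrArg List.length xs.2
        simp only [List.length_map] at h2
        omega
      simp [lamLaw, hx]
    rw [iSup_congr hterm]
    simp [lamLaw, h]
end

section
/- For a commutative and completely distributive quantale V, the map ξ : UV → V on ultrafilters of V defined by ξ(𝔷) = ⋀_{C ∈ 𝔷} ⋁ C satisfies ξ(𝔷) = ⋁_{C ∈ 𝔷} ⋀ C for every ultrafilter 𝔷 on V. -/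
/-- For a completely distributive (complete) lattice `V` and an ultrafilter `𝔷` on the
set `V`, one has `⨅_{C ∈ 𝔷} ⋁ C = ⨆_{C ∈ 𝔷} ⋀ C`. -/
theorem ultrafilter_inf_sup_eq_sup_inf (V : Type*) [CompletelyDistribLattice V]
    (z : Ultrafilter V) :
    ⨅ C ∈ z, sSup C = ⨆ C ∈ z, sInf C := by
  apply le_antisymm
  · have h1 : ⨅ C ∈ z, sSup C = ⨅ C : {C : Set V // C ∈ z}, ⨆ x : C.1, (x : V) := by
      rw [iInf_subtype']
      simp_rw [sSup_eq_iSup']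
    rw [h1, iInf_iSup_eq]
    apply iSup_le
    intro g
    set b := ⨅ C : {C : Set V // C ∈ z}, (g C : V) with hb
    have hA : {v : V | b ≤ v} ∈ z := by
      by_contra h
      have hc : {v : V | b ≤ v}ᶜ ∈ z := (Ultrafilter.compl_mem_iff_notMem).2 h
      have hg := (g ⟨_, hc⟩).2
      exact hg (iInf_le (fun C : {C : Set V // C ∈ z} => (g C : V)) ⟨_, hc⟩)
    calc b ≤ sInf {v : V | b ≤ v} := le_sInf fun v hv => hv
      _ ≤ ⨆ C ∈ z, sInf C := le_biSup _ hA
  · apply iSup_le; intro C; apply iSup_le; intro hC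
    apply le_iInf; intro D; apply le_iInf; intro hD
    obtain ⟨x, hxC, hxD⟩ := Filter.nonempty_of_mem (z.toFilter.inter_mem hC hD)
    exact le_trans (sInf_le hxC) (le_sSup hxD)
end
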